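/- Let N ≥ 2, α ∈ (0,1), β ∈ (α,1), λ* > 0, τ₁ := 1/(6λ*), τ ∈ (−τ₁,τ₁) with τ ≠ 0, and let u, v : ℝ^{N-1} → ℝ be of class C^{1,β} with ‖u − λ*‖_{C^{1,β}} < λ*/2. Then for every s ∈ ℝ^{N-1}, the directional derivative lim_{ς→0} ( 𝓗(τ, u + ςv)(s) − 𝓗(τ, u)(s) ) / ς exists and equals − ∑_{q∈ℤ, q≠0} ∫_{ℝ^{N-1}} (v(s) − v(s−t)) / ( |t|² + (u(s) − u(s−t) − q/τ)² )^{(N+α)/2} dt + ∑_{q∈ℤ, q≠0} ∫_{ℝ^{N-1}} (v(s) + v(s−t)) / ( |t|² + (u(s) + u(s−t) − q/τ)² )^{(N+α)/2} dt. -/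

import Mathlib

open MeasureTheory Real Filter Topology
open scoped Classical

noncomputable section

abbrev ES (m : ℕ) : Type := EuclideanSpace ℝ (Fin (m + 1))

/-- `u` is of class `C^{1,β}`. -/
def IsC1Beta {n : ℕ} (β : ℝ) (u : EuclideanSpace ℝ (Fin n) → ℝ) : Prop :=
  ContDiff ℝ 1 u ∧ (∃ C, ∀ x, |u x| ≤ C) ∧ (∃ C, ∀ x, ‖fderiv ℝ u x‖ ≤ C) ∧
    (∃ C, ∀ x y, ‖fderiv ℝ u x - fderiv ℝ u y‖ ≤ C * ‖x - y‖ ^ β)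

/-- The `β`-Hölder seminorm of the gradient of `u`. -/
def holderSemi {n : ℕ} (β : ℝ) (u : EuclideanSpace ℝ (Fin n) → ℝ) : ℝ :=
  ⨆ p : EuclideanSpace ℝ (Fin n) × EuclideanSpace ℝ (Fin n),
    if p.1 = p.2 then 0 else ‖fderiv ℝ u p.1 - fderiv ℝ u p.2‖ / ‖p.1 - p.2‖ ^ β

/-- The `C^{1,β}` norm: `sup |u| + sup |∇u| + [∇u]_β`. -/
def c1betaNorm {n : ℕ} (β : ℝ) (u : EuclideanSpace ℝ (Fin n) → ℝ) : ℝ :=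
  (⨆ x, |u x|) + (⨆ x, ‖fderiv ℝ u x‖) + holderSemi β u

/-- The operator `𝓗(τ,u)(s) = ∑_{q ≠ 0} ∫∫ u(s-t)/(|t|² + (u(s)-u(s-t)z-q/τ)²)^{(N+α)/2} dz dt`,
with `N = m + 2`. -/
def Hcal (m : ℕ) (α : ℝ) (τ : ℝ) (u : ES m → ℝ) (s : ES m) : ℝ :=
  ∑' q : {q : ℤ // q ≠ 0},
    ∫ t : ES m, ∫ z in Set.Ioo (-1 : ℝ) 1,
      u (s - t) / (‖t‖ ^ 2 + (u s - u (s - t) * z - (q : ℤ) / τ) ^ 2) ^ (((m : ℝ) + 2 + α) / 2)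

set_option linter.unusedSectionVars false
set_option maxHeartbeats 1000000

lemma integrable_base (m : ℕ) {c p : ℝ} (hc : 0 < c) (hp : (m + 1 : ℝ) < 2 * p) :
    Integrable (fun t : ES m => (‖t‖ ^ 2 + c) ^ (-p)) := by
  have hp0 : 0 < p := by nlinarith [Nat.cast_nonneg (α := ℝ) m]
  have hfin : (Module.finrank ℝ (ES m) : ℝ) < 2 * p := by
    simpa [finrank_euclideanSpace, Fintype.card_fin] using hp
  have hint := (integrable_rpow_neg_one_add_norm_sq (E := ES m) (μ := volume) hfin).const_mul
      ((min 1 c) ^ (-p))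
  simp only [show -(2*p)/2 = -p by ring] at hint
  refine hint.mono' ?_ (Eventually.of_forall fun t => ?_)
  · refine (Continuous.rpow_const (by continuity) fun t => Or.inl ?_).aestronglyMeasurable
    positivity
  · have h1 : (0:ℝ) < min 1 c := lt_min one_pos hc
    have h2 : min 1 c * (1 + ‖t‖ ^ 2) ≤ ‖t‖ ^ 2 + c := by
      have := min_le_left (1:ℝ) c
      have := min_le_right (1:ℝ) c
      nlinarith [sq_nonneg ‖t‖]
    have hpos : (0:ℝ) < ‖t‖ ^ 2 + c := by positivity
    rw [Real.norm_eq_abs, abs_of_pos (rpow_pos_of_pos hpos _)]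
    calc (‖t‖ ^ 2 + c) ^ (-p) ≤ (min 1 c * (1 + ‖t‖ ^ 2)) ^ (-p) :=
          rpow_le_rpow_of_nonpos (by positivity) h2 (by linarith)
      _ = (min 1 c) ^ (-p) * ((1 + ‖t‖ ^ 2) ^ (-p)) := by
          rw [Real.mul_rpow h1.le (by positivity)]


lemma absW_lb {L τ ws wst z : ℝ} (hL : 0 < L) (hτ : τ ≠ 0) (hττ : |τ| < 1 / (6 * L))
    (hws : |ws| ≤ 2 * L) (hwst : |wst| ≤ 2 * L) {q : ℤ} (hq : q ≠ 0) (hz : |z| ≤ 1) :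
    (2 * L * |(q : ℝ)|) ^ 2 ≤ (ws - wst * z - (q : ℝ) / τ) ^ 2 := by
  have hq1 : (1:ℝ) ≤ |(q:ℝ)| := by
    rw [← Int.cast_abs]; exact_mod_cast Int.one_le_abs hq
  have hτ0 : 0 < |τ| := abs_pos.mpr hτ
  have h6 : 6 * L * |τ| < 1 := by
    rw [lt_div_iff₀ (by positivity)] at hττ; nlinarith
  have hk : 6 * L * |(q:ℝ)| ≤ |(q:ℝ) / τ| := by
    rw [abs_div, le_div_iff₀ hτ0]; nlinarith
  have hX : |ws - wst * z| ≤ 4 * L := by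
    calc |ws - wst * z| ≤ |ws| + |wst * z| := _root_.abs_sub ws (wst * z)
      _ = |ws| + |wst| * |z| := by rw [abs_mul]
      _ ≤ 4 * L := by nlinarith [abs_nonneg wst]
  have h1 : 2 * L * |(q:ℝ)| ≤ |ws - wst * z - (q:ℝ)/τ| := by
    have h2 := abs_sub_abs_le_abs_sub ((q:ℝ)/τ) (ws - wst * z)
    rw [abs_sub_comm ((q:ℝ)/τ) (ws - wst * z)] at h2
    nlinarith
  calc (2 * L * |(q : ℝ)|) ^ 2 ≤ |ws - wst * z - (q:ℝ)/τ| ^ 2 := by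
        apply pow_le_pow_left₀ (by positivity) h1
    _ = _ := sq_abs _

lemma summable_Cq {L b : ℝ} (hL : 0 < L) (hb : 1 < b) :
    Summable (fun q : {q : ℤ // q ≠ 0} => (((2 * L * |(q.1 : ℝ)|) ^ 2) ^ (-(b/2)))) := by
  have key : ∀ q : ℤ, ((2 * L * |(q:ℝ)|) ^ 2) ^ (-(b/2))
      = (2*L) ^ (-b) * |(q:ℝ)| ^ (-b) := by
    intro q
    rw [← Real.rpow_natCast (2*L*|(q:ℝ)|) 2, ← Real.rpow_mul (by positivity),
      show ((2:ℕ):ℝ) * (-(b/2)) = -b by push_cast; ring,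
      Real.mul_rpow (by positivity) (abs_nonneg _)]
  have h := (Real.summable_abs_int_rpow hb).mul_left ((2*L) ^ (-b))
  have h2 := h.comp_injective (Subtype.val_injective (p := fun q : ℤ => q ≠ 0))
  exact h2.congr fun q => (key q.1).symm

lemma div_den_le {X M D T A B p1 p2 : ℝ} (hX : |X| ≤ M) (hD : T + A ≤ D) (hT : 0 ≤ T)
    (h0B : 0 < B) (hBA : B ≤ A) (hp1 : 0 ≤ p1) (hp2 : 0 ≤ p2) :
    |X / D ^ (p1 + p2)| ≤ M * (A ^ (-p2) * (T + B) ^ (-p1)) := by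
  have hA : 0 < A := lt_of_lt_of_le h0B hBA
  have hD0 : 0 < D := by linarith
  have hM : 0 ≤ M := le_trans (abs_nonneg X) hX
  have hDp : (0:ℝ) < D ^ (p1 + p2) := rpow_pos_of_pos hD0 _
  rw [abs_div, abs_of_pos hDp, div_le_iff₀ hDp]
  have e1 : D ^ (-(p1+p2)) ≤ A ^ (-p2) * (T + B) ^ (-p1) := by
    calc D ^ (-(p1+p2)) ≤ (T + A) ^ (-(p1+p2)) :=
          rpow_le_rpow_of_nonpos (by linarith) hD (by linarith)
      _ = (T + A) ^ (-p2) * (T + A) ^ (-p1) := by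
          rw [← Real.rpow_add (by linarith)]; ring_nf
      _ ≤ A ^ (-p2) * (T + B) ^ (-p1) := by
          apply mul_le_mul
          · exact rpow_le_rpow_of_nonpos hA (by linarith) (by linarith)
          · exact rpow_le_rpow_of_nonpos (by linarith) (by linarith) (by linarith)
          · positivity
          · positivity
  calc |X| ≤ M := hX
    _ = M * (D ^ (-(p1+p2)) * D ^ (p1+p2)) := by
        rw [← Real.rpow_add hD0, neg_add_cancel, Real.rpow_zero, mul_one]
    _ ≤ M * ((A ^ (-p2) * (T + B) ^ (-p1)) * D ^ (p1+p2)) := by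
        have := mul_le_mul_of_nonneg_right e1 hDp.le
        nlinarith [mul_le_mul_of_nonneg_left this hM]
    _ = M * (A ^ (-p2) * (T + B) ^ (-p1)) * D ^ (p1+p2) := by ring

lemma deriv_expr_bound {c a X Bc T A L Mv p1 p2 : ℝ}
    (hc : |c| ≤ Mv) (ha : |a| ≤ 2*L) (hBc : |Bc| ≤ 2*Mv) (hL : 0 < L)
    (hT : 0 ≤ T) (hXA : A ≤ X^2) (hBA : (2*L)^2 ≤ A) (hp1 : 0 ≤ p1) (hp2 : 0 ≤ p2) :
    |(c * (T + X^2) ^ (p1+p2) - a * (2*X*Bc) * ((p1+p2) * (T + X^2) ^ ((p1+p2)-1)))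
        / ((T + X^2) ^ (p1+p2))^2|
      ≤ (Mv*(1+4*(p1+p2))) * (A ^ (-p2) * (T + (2*L)^2) ^ (-p1)) := by
  set p := p1 + p2 with hp
  have hMv : 0 ≤ Mv := le_trans (abs_nonneg c) hc
  have hD0 : (0:ℝ) < T + X^2 := by nlinarith
  set D := T + X^2 with hD
  have hDp : (0:ℝ) < D ^ p := rpow_pos_of_pos hD0 _
  have hDpm : (0:ℝ) < D ^ (p-1) := rpow_pos_of_pos hD0 _
  have hp0 : 0 ≤ p := by positivity
  -- |X| * D^(p-1) ≤ D^p / (2*L)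
  have hXD : |X| ≤ D ^ ((1:ℝ)/2) := by
    have : |X| = (X^2) ^ ((1:ℝ)/2) := by
      rw [← Real.sqrt_eq_rpow, Real.sqrt_sq_eq_abs]
    rw [this]
    exact Real.rpow_le_rpow (sq_nonneg X) (by nlinarith) (by norm_num)
  have h2L : 2*L ≤ D ^ ((1:ℝ)/2) := by
    have : 2*L = ((2*L)^2) ^ ((1:ℝ)/2) := by
      rw [← Real.sqrt_eq_rpow, Real.sqrt_sq (by positivity)]
    rw [this]
    exact Real.rpow_le_rpow (by positivity) (by nlinarith) (by norm_num)
  have hhalf : D ^ ((1:ℝ)/2) * D ^ (p-1) * D ^ ((1:ℝ)/2) = D ^ p := by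
    rw [← Real.rpow_add hD0, ← Real.rpow_add hD0]; ring_nf
  have hXDp : |X| * D ^ (p-1) * (2*L) ≤ D ^ p := by
    calc |X| * D ^ (p-1) * (2*L) ≤ D ^ ((1:ℝ)/2) * D ^ (p-1) * D ^ ((1:ℝ)/2) := by
          apply mul_le_mul (mul_le_mul_of_nonneg_right hXD hDpm.le) h2L (by positivity)
          positivity
      _ = D ^ p := hhalf
  -- numerator bound
  have hnum : |c * D ^ p - a * (2*X*Bc) * (p * D ^ (p-1))| ≤ Mv*(1+4*p) * D ^ p := by
    have h1 : |c * D ^ p| ≤ Mv * D ^ p := by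
      rw [abs_mul, abs_of_pos hDp]
      exact mul_le_mul_of_nonneg_right hc hDp.le
    have h2 : |a * (2*X*Bc) * (p * D ^ (p-1))| ≤ 4 * Mv * p * D ^ p := by
      rw [abs_mul, abs_mul, abs_mul, abs_mul, abs_mul, abs_of_nonneg hp0, abs_of_pos hDpm,
        abs_of_nonneg (by norm_num : (0:ℝ) ≤ 2)]
      have e1 : |a| * (2 * |X| * |Bc|) * (p * D ^ (p-1))
          ≤ (2*L) * (2 * |X| * (2*Mv)) * (p * D ^ (p-1)) := by
        apply mul_le_mul_of_nonneg_right _ (by positivity)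
        exact mul_le_mul ha (mul_le_mul_of_nonneg_left hBc (by positivity))
          (by positivity) (by positivity)
      have e2 : (2*L) * (2 * |X| * (2*Mv)) * (p * D ^ (p-1))
          = (|X| * D ^ (p-1) * (2*L)) * (4*Mv*p) := by ring
      calc |a| * (2 * |X| * |Bc|) * (p * D ^ (p-1))
          ≤ (|X| * D ^ (p-1) * (2*L)) * (4*Mv*p) := by rw [← e2]; exact e1
        _ ≤ D ^ p * (4*Mv*p) := mul_le_mul_of_nonneg_right hXDp (by positivity)
        _ = 4 * Mv * p * D ^ p := by ring
    calc |c * D ^ p - a * (2*X*Bc) * (p * D ^ (p-1))|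
        ≤ |c * D ^ p| + |a * (2*X*Bc) * (p * D ^ (p-1))| := _root_.abs_sub _ _
      _ ≤ Mv * D ^ p + 4 * Mv * p * D ^ p := add_le_add h1 h2
      _ = Mv*(1+4*p) * D ^ p := by ring
  -- combine
  have key : |(c * D ^ p - a * (2*X*Bc) * (p * D ^ (p-1))) / (D ^ p)^2|
      ≤ (Mv*(1+4*p)) / D ^ p := by
    rw [abs_div, abs_of_pos (by positivity : (0:ℝ) < (D ^ p)^2), div_le_div_iff₀ (by positivity) hDp]
    calc |c * D ^ p - a * (2*X*Bc) * (p * D ^ (p-1))| * D ^ p ≤ (Mv*(1+4*p) * D ^ p) * D ^ p :=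
          mul_le_mul_of_nonneg_right hnum hDp.le
      _ = Mv*(1+4*p) * (D ^ p)^2 := by ring
  refine le_trans key ?_
  have := div_den_le (X := Mv*(1+4*p)) (M := Mv*(1+4*p)) (D := D) (T := T) (A := A)
      (B := (2*L)^2) (p1 := p1) (p2 := p2)
      (le_of_eq (abs_of_nonneg (by positivity))) (by nlinarith) hT (by positivity) hBA hp1 hp2
  calc Mv*(1+4*p) / D ^ p = |Mv*(1+4*p) / D ^ (p1+p2)| := by
        rw [abs_of_nonneg (by positivity)]
    _ ≤ _ := this

lemma hasDerivAt_inner (a c d e k T p σ z : ℝ)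
    (hD0 : 0 < T + (e + σ * d - (a + σ * c) * z - k) ^ 2) :
    HasDerivAt (fun ς : ℝ => (a + ς * c) / (T + (e + ς * d - (a + ς * c) * z - k) ^ 2) ^ p)
      ((c * (T + (e + σ * d - (a + σ * c) * z - k) ^ 2) ^ p
          - (a + σ * c) * (2 * (e + σ * d - (a + σ * c) * z - k) * (d - c * z))
            * (p * (T + (e + σ * d - (a + σ * c) * z - k) ^ 2) ^ (p - 1)))
        / ((T + (e + σ * d - (a + σ * c) * z - k) ^ 2) ^ p) ^ 2) σ := by
  have hnum : HasDerivAt (fun ς : ℝ => a + ς * c) c σ := by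
    simpa using ((hasDerivAt_id' σ).mul_const c).const_add a
  have hlin : HasDerivAt (fun ς : ℝ => e + ς * d - (a + ς * c) * z - k) (d - c * z) σ := by
    have h1 : HasDerivAt (fun ς : ℝ => e + ς * d) d σ := by
      simpa using ((hasDerivAt_id' σ).mul_const d).const_add e
    have h2 : HasDerivAt (fun ς : ℝ => (a + ς * c) * z) (c * z) σ := by
      simpa using hnum.mul_const z
    simpa using (h1.sub h2).sub_const k
  have hbase : HasDerivAt (fun ς : ℝ => T + (e + ς * d - (a + ς * c) * z - k) ^ 2)
      (2 * (e + σ * d - (a + σ * c) * z - k) * (d - c * z)) σ := by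
    have h := (hlin.pow 2).const_add T
    exact h.congr_deriv (by push_cast; ring)
  have hden : HasDerivAt (fun ς : ℝ => (T + (e + ς * d - (a + ς * c) * z - k) ^ 2) ^ p)
      ((2 * (e + σ * d - (a + σ * c) * z - k) * (d - c * z)) * p
        * (T + (e + σ * d - (a + σ * c) * z - k) ^ 2) ^ (p - 1)) σ :=
    hbase.rpow_const (Or.inl hD0.ne')
  have h := hnum.div hden (Real.rpow_pos_of_pos hD0 p).ne'
  exact h.congr_deriv (by ring)

lemma hasDerivAt_bdry (A c d e' k T p z : ℝ) (hD0 : 0 < T + (e' - A * z - k) ^ 2) :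
    HasDerivAt (fun y : ℝ => (c * y - d) / (T + (e' - A * y - k) ^ 2) ^ p)
      ((c * (T + (e' - A * z - k) ^ 2) ^ p
          - A * (2 * (e' - A * z - k) * (d - c * z)) * (p * (T + (e' - A * z - k) ^ 2) ^ (p - 1)))
        / ((T + (e' - A * z - k) ^ 2) ^ p) ^ 2) z := by
  have hnum : HasDerivAt (fun y : ℝ => c * y - d) c z := by
    simpa using ((hasDerivAt_id z).const_mul c).sub_const d
  have hlin : HasDerivAt (fun y : ℝ => e' - A * y - k) (-A) z := by
    have h1 : HasDerivAt (fun y : ℝ => A * y) A z := by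
      simpa using (hasDerivAt_id z).const_mul A
    simpa using (h1.const_sub e').sub_const k
  have hbase : HasDerivAt (fun y : ℝ => T + (e' - A * y - k) ^ 2)
      (2 * (e' - A * z - k) * (-A)) z := by
    have h := (hlin.pow 2).const_add T
    exact h.congr_deriv (by push_cast; ring)
  have hden : HasDerivAt (fun y : ℝ => (T + (e' - A * y - k) ^ 2) ^ p)
      ((2 * (e' - A * z - k) * (-A)) * p * (T + (e' - A * z - k) ^ 2) ^ (p - 1)) z :=
    hbase.rpow_const (Or.inl hD0.ne')
  have h := hnum.div hden (Real.rpow_pos_of_pos hD0 p).ne'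
  exact h.congr_deriv (by ring)

/-- wrapped versions with `p = p1 + p2` -/
lemma div_den_le' {X M D T A B p p1 p2 : ℝ} (hps : p = p1 + p2) (hX : |X| ≤ M) (hD : T + A ≤ D)
    (hT : 0 ≤ T) (h0B : 0 < B) (hBA : B ≤ A) (hp1 : 0 ≤ p1) (hp2 : 0 ≤ p2) :
    |X / D ^ p| ≤ M * (A ^ (-p2) * (T + B) ^ (-p1)) := by
  subst hps; exact div_den_le hX hD hT h0B hBA hp1 hp2

lemma deriv_expr_bound' {c a X Bc T A L Mv p p1 p2 : ℝ} (hps : p = p1 + p2)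
    (hc : |c| ≤ Mv) (ha : |a| ≤ 2*L) (hBc : |Bc| ≤ 2*Mv) (hL : 0 < L)
    (hT : 0 ≤ T) (hXA : A ≤ X^2) (hBA : (2*L)^2 ≤ A) (hp1 : 0 ≤ p1) (hp2 : 0 ≤ p2) :
    |(c * (T + X^2) ^ p - a * (2*X*Bc) * (p * (T + X^2) ^ (p-1))) / ((T + X^2) ^ p)^2|
      ≤ (Mv*(1+4*p)) * (A ^ (-p2) * (T + (2*L)^2) ^ (-p1)) := by
  subst hps; exact deriv_expr_bound hc ha hBc hL hT hXA hBA hp1 hp2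

/-- the integrand of `Hcal` along the path `ς ↦ u + ς v`. -/
def KK (m : ℕ) (p : ℝ) (u v : ES m → ℝ) (s : ES m) (k : ℝ) (ς : ℝ) (t : ES m) (z : ℝ) : ℝ :=
  (u (s - t) + ς * v (s - t)) /
    (‖t‖ ^ 2 + (u s + ς * v s - (u (s - t) + ς * v (s - t)) * z - k) ^ 2) ^ p

/-- its `ς`-derivative. -/
def KK' (m : ℕ) (p : ℝ) (u v : ES m → ℝ) (s : ES m) (k : ℝ) (ς : ℝ) (t : ES m) (z : ℝ) : ℝ :=
  (v (s - t) * (‖t‖ ^ 2 + (u s + ς * v s - (u (s - t) + ς * v (s - t)) * z - k) ^ 2) ^ p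
      - (u (s - t) + ς * v (s - t)) *
          (2 * (u s + ς * v s - (u (s - t) + ς * v (s - t)) * z - k) * (v s - v (s - t) * z)) *
          (p * (‖t‖ ^ 2 + (u s + ς * v s - (u (s - t) + ς * v (s - t)) * z - k) ^ 2) ^ (p - 1)))
    / ((‖t‖ ^ 2 + (u s + ς * v s - (u (s - t) + ς * v (s - t)) * z - k) ^ 2) ^ p) ^ 2

section PerQ

variable {m : ℕ} {L τ Mv ε p p1 p2 : ℝ} {u v : ES m → ℝ} {s : ES m} {q : ℤ}
variable (hL : 0 < L) (hτ : τ ≠ 0) (hττ : |τ| < 1 / (6 * L))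
  (hu : Continuous u) (hv : Continuous v)
  (hub : ∀ x, |u x| ≤ 3/2 * L) (hvb : ∀ x, |v x| ≤ Mv)
  (hε : 0 < ε) (hεM : ε * Mv ≤ L / 2)
  (hps : p = p1 + p2) (hp1 : 0 ≤ p1) (hp2 : 0 ≤ p2) (hpm : (m + 1 : ℝ) < 2 * p1)
  (hq : q ≠ 0)

include hvb in
lemma hMv0 : 0 ≤ Mv := le_trans (abs_nonneg _) (hvb 0)

include hub hvb hεM hε in
lemma wbound : ∀ ς : ℝ, |ς| ≤ ε → ∀ x, |u x + ς * v x| ≤ 2 * L := by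
  intro ς hς x
  have h1 : |ς * v x| ≤ ε * Mv := by
    rw [abs_mul]
    exact mul_le_mul hς (hvb x) (abs_nonneg _) hε.le
  calc |u x + ς * v x| ≤ |u x| + |ς * v x| := abs_add_le _ _
    _ ≤ 3/2 * L + L/2 := add_le_add (hub x) (le_trans h1 hεM)
    _ = 2 * L := by ring

include hL hτ hττ hub hvb hε hεM hq in
lemma base_lb : ∀ ς : ℝ, |ς| ≤ ε → ∀ (t : ES m) (z : ℝ), |z| ≤ 1 →
    (2 * L * |(q : ℝ)|) ^ 2
      ≤ (u s + ς * v s - (u (s - t) + ς * v (s - t)) * z - (q : ℝ) / τ) ^ 2 := by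
  intro ς hς t z hz
  have hw := wbound hub hvb hε hεM ς hς
  exact absW_lb hL hτ hττ (hw s) (hw (s - t)) hq hz

include hL hq in
lemma qsq_lb : (2 * L) ^ 2 ≤ (2 * L * |(q : ℝ)|) ^ 2 := by
  have hq1 : (1:ℝ) ≤ |(q:ℝ)| := by
    rw [← Int.cast_abs]; exact_mod_cast Int.one_le_abs hq
  have h2 : (1:ℝ) ≤ |(q:ℝ)| ^ 2 := by nlinarith
  nlinarith [sq_nonneg (2 * L), sq_nonneg (2 * L * |(q:ℝ)|)]

include hL hτ hττ hub hvb hε hεM hps hp1 hp2 hq in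
lemma KK_bound : ∀ ς : ℝ, |ς| ≤ ε → ∀ (t : ES m) (z : ℝ), |z| ≤ 1 →
    |KK m p u v s ((q : ℝ) / τ) ς t z|
      ≤ 2 * L * (((2 * L * |(q : ℝ)|) ^ 2) ^ (-p2) * (‖t‖ ^ 2 + (2 * L) ^ 2) ^ (-p1)) := by
  intro ς hς t z hz
  refine div_den_le' hps (wbound hub hvb hε hεM ς hς (s - t)) ?_ (by positivity) (by positivity)
    (qsq_lb hL hq) hp1 hp2
  have hb := base_lb (s := s) hL hτ hττ hub hvb hε hεM hq ς hς t z hz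
  linarith

include hL hτ hττ hub hvb hε hεM hps hp1 hp2 hq in
lemma KK'_bound : ∀ ς : ℝ, |ς| ≤ ε → ∀ (t : ES m) (z : ℝ), |z| ≤ 1 →
    |KK' m p u v s ((q : ℝ) / τ) ς t z|
      ≤ Mv * (1 + 4 * p)
          * (((2 * L * |(q : ℝ)|) ^ 2) ^ (-p2) * (‖t‖ ^ 2 + (2 * L) ^ 2) ^ (-p1)) := by
  intro ς hς t z hz
  refine deriv_expr_bound' hps (hvb (s - t)) (wbound hub hvb hε hεM ς hς (s - t)) ?_ hL
    (by positivity) (base_lb hL hτ hττ hub hvb hε hεM hq ς hς t z hz) (qsq_lb hL hq) hp1 hp2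
  have h1 := _root_.abs_sub (v s) (v (s - t) * z)
  rw [abs_mul] at h1
  have h2 : |z| ≤ 1 := hz
  nlinarith [hvb s, hvb (s - t), abs_nonneg (v (s - t)), abs_nonneg z,
    le_trans (abs_nonneg (v s)) (hvb s)]

include hL hτ hττ hub hvb hε hεM hq in
lemma base_pos_t : ∀ ς : ℝ, |ς| ≤ ε → ∀ (t : ES m) (z : ℝ), |z| ≤ 1 →
    0 < ‖t‖ ^ 2 + (u s + ς * v s - (u (s - t) + ς * v (s - t)) * z - (q : ℝ) / τ) ^ 2 := by
  intro ς hς t z hz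
  have hb := base_lb (s := s) hL hτ hττ hub hvb hε hεM hq ς hς t z hz
  have h2 : (0:ℝ) < (2 * L * |(q:ℝ)|) ^ 2 := by
    have hq1 : (1:ℝ) ≤ |(q:ℝ)| := by
      rw [← Int.cast_abs]; exact_mod_cast Int.one_le_abs hq
    positivity
  nlinarith [sq_nonneg ‖t‖]

include hL hτ hττ hu hv hub hvb hε hεM hq in
lemma cont_t_KK : ∀ ς : ℝ, |ς| ≤ ε → ∀ z : ℝ, |z| ≤ 1 →
    Continuous fun t => KK m p u v s ((q : ℝ) / τ) ς t z := by
  intro ς hς z hz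
  have hbase : Continuous (fun t : ES m =>
      ‖t‖ ^ 2 + (u s + ς * v s - (u (s - t) + ς * v (s - t)) * z - (q : ℝ) / τ) ^ 2) := by
    fun_prop
  have hpos := base_pos_t (s := s) hL hτ hττ hub hvb hε hεM hq ς hς
  unfold KK
  apply Continuous.div (by fun_prop)
    (hbase.rpow_const fun t => Or.inl (hpos t z hz).ne')
    (fun t => (Real.rpow_pos_of_pos (hpos t z hz) p).ne')

include hL hτ hττ hu hv hub hvb hε hεM hq in
lemma cont_t_KK' : ∀ ς : ℝ, |ς| ≤ ε → ∀ z : ℝ, |z| ≤ 1 →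
    Continuous fun t => KK' m p u v s ((q : ℝ) / τ) ς t z := by
  intro ς hς z hz
  have hbase : Continuous (fun t : ES m =>
      ‖t‖ ^ 2 + (u s + ς * v s - (u (s - t) + ς * v (s - t)) * z - (q : ℝ) / τ) ^ 2) := by
    fun_prop
  have hpos := base_pos_t (s := s) hL hτ hττ hub hvb hε hεM hq ς hς
  have h1 := hbase.rpow_const (p := p) fun t => Or.inl (hpos t z hz).ne'
  have h2 := hbase.rpow_const (p := p - 1) fun t => Or.inl (hpos t z hz).ne'
  unfold KK'
  apply Continuous.div _ (h1.pow 2)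
    (fun t => pow_ne_zero 2 (Real.rpow_pos_of_pos (hpos t z hz) p).ne')
  apply Continuous.sub (by fun_prop)
  apply Continuous.mul (Continuous.mul (by fun_prop) (by fun_prop)) (by fun_prop)

include hL hτ hττ hub hvb hε hεM hq in
lemma cont_z_KK : ∀ ς : ℝ, |ς| ≤ ε → ∀ t : ES m,
    ContinuousOn (fun z => KK m p u v s ((q : ℝ) / τ) ς t z) (Set.Icc (-1) 1) := by
  intro ς hς t
  have hbase : Continuous (fun z : ℝ =>
      ‖t‖ ^ 2 + (u s + ς * v s - (u (s - t) + ς * v (s - t)) * z - (q : ℝ) / τ) ^ 2) := by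
    fun_prop
  have hpos := base_pos_t (s := s) hL hτ hττ hub hvb hε hεM hq ς hς t
  unfold KK
  apply ContinuousOn.div continuousOn_const
    (hbase.continuousOn.rpow_const fun z hz => Or.inl (hpos z (abs_le.2 ⟨hz.1, hz.2⟩)).ne')
    (fun z hz => (Real.rpow_pos_of_pos (hpos z (abs_le.2 ⟨hz.1, hz.2⟩)) p).ne')

include hL hτ hττ hub hvb hε hεM hq in
lemma cont_z_KK' : ∀ ς : ℝ, |ς| ≤ ε → ∀ t : ES m,
    ContinuousOn (fun z => KK' m p u v s ((q : ℝ) / τ) ς t z) (Set.Icc (-1) 1) := by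
  intro ς hς t
  have hbase : Continuous (fun z : ℝ =>
      ‖t‖ ^ 2 + (u s + ς * v s - (u (s - t) + ς * v (s - t)) * z - (q : ℝ) / τ) ^ 2) := by
    fun_prop
  have hpos : ∀ z ∈ Set.Icc (-1:ℝ) 1, 0 < ‖t‖ ^ 2
      + (u s + ς * v s - (u (s - t) + ς * v (s - t)) * z - (q : ℝ) / τ) ^ 2 :=
    fun z hz => base_pos_t (s := s) hL hτ hττ hub hvb hε hεM hq ς hς t z
      (abs_le.2 ⟨hz.1, hz.2⟩)
  have h1 := hbase.continuousOn.rpow_const (s := Set.Icc (-1:ℝ) 1) (p := p)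
    fun z hz => Or.inl (hpos z hz).ne'
  have h2 := hbase.continuousOn.rpow_const (s := Set.Icc (-1:ℝ) 1) (p := p - 1)
    fun z hz => Or.inl (hpos z hz).ne'
  unfold KK'
  apply ContinuousOn.div _ (h1.pow 2)
    (fun z hz => pow_ne_zero 2 (Real.rpow_pos_of_pos (hpos z hz) p).ne')
  apply ContinuousOn.sub (continuousOn_const.mul h1)
  apply ContinuousOn.mul (ContinuousOn.mul (by fun_prop) (by fun_prop)) (continuousOn_const.mul h2)

include hL hτ hττ hub hvb hε hεM hps hp1 hp2 hq in
lemma FTC_KK' (σ : ℝ) (hσ : |σ| ≤ ε) (t : ES m) :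
    ∫ z in Set.Ioo (-1:ℝ) 1, KK' m p u v s ((q:ℝ)/τ) σ t z
      = (v s + v (s - t)) /
          (‖t‖ ^ 2 + (u s + σ * v s + (u (s - t) + σ * v (s - t)) - (q:ℝ)/τ) ^ 2) ^ p
        - (v s - v (s - t)) /
          (‖t‖ ^ 2 + (u s + σ * v s - (u (s - t) + σ * v (s - t)) - (q:ℝ)/τ) ^ 2) ^ p := by
  have hioo : ∫ z in Set.Ioo (-1:ℝ) 1, KK' m p u v s ((q:ℝ)/τ) σ t z
      = ∫ z in (-1:ℝ)..1, KK' m p u v s ((q:ℝ)/τ) σ t z := by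
    rw [intervalIntegral.integral_of_le (by norm_num), integral_Ioc_eq_integral_Ioo]
  rw [hioo]
  have hderiv : ∀ z ∈ Set.uIcc (-1:ℝ) 1, HasDerivAt
      (fun y => (v (s - t) * y - v s) /
        (‖t‖ ^ 2 + (u s + σ * v s - (u (s - t) + σ * v (s - t)) * y - (q:ℝ)/τ) ^ 2) ^ p)
      (KK' m p u v s ((q:ℝ)/τ) σ t z) z := by
    intro z hz
    rw [Set.uIcc_of_le (by norm_num)] at hz
    have hz1 : |z| ≤ 1 := abs_le.2 ⟨hz.1, hz.2⟩
    have h0 := base_pos_t (s := s) hL hτ hττ hub hvb hε hεM hq σ hσ t z hz1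
    exact hasDerivAt_bdry (u (s - t) + σ * v (s - t)) (v (s - t)) (v s) (u s + σ * v s)
      ((q:ℝ)/τ) (‖t‖ ^ 2) p z h0
  have hint : IntervalIntegrable (KK' m p u v s ((q:ℝ)/τ) σ t) volume (-1 : ℝ) 1 := by
    apply ContinuousOn.intervalIntegrable
    rw [Set.uIcc_of_le (by norm_num)]
    exact cont_z_KK' (s := s) hL hτ hττ hub hvb hε hεM hq σ hσ t
  rw [intervalIntegral.integral_eq_sub_of_hasDerivAt hderiv hint]
  rw [show u s + σ * v s - (u (s - t) + σ * v (s - t)) * (-1 : ℝ) - (q:ℝ)/τ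
        = u s + σ * v s + (u (s - t) + σ * v (s - t)) - (q:ℝ)/τ by ring,
      show (u (s - t) + σ * v (s - t)) * (1 : ℝ) = u (s - t) + σ * v (s - t) from mul_one _]
  ring

include hL hτ hττ hub hvb hε hεM hps hp1 hp2 hq in
lemma inner_hasDeriv (σ : ℝ) (hσ : |σ| < ε) (t : ES m) :
    HasDerivAt (fun ς => ∫ z in Set.Ioo (-1:ℝ) 1, KK m p u v s ((q:ℝ)/τ) ς t z)
      (∫ z in Set.Ioo (-1:ℝ) 1, KK' m p u v s ((q:ℝ)/τ) σ t z) σ := by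
  have hδ : 0 < ε - |σ| := by
    have := abs_nonneg σ; linarith
  have hball : ∀ ς ∈ Metric.ball σ (ε - |σ|), |ς| ≤ ε := by
    intro ς hς
    rw [Metric.mem_ball, Real.dist_eq] at hς
    have h := abs_add_le (ς - σ) σ
    simp only [sub_add_cancel] at h
    linarith
  have hmz : ∀ z : ℝ, z ∈ Set.Ioo (-1:ℝ) 1 → |z| ≤ 1 :=
    fun z hz => abs_le.2 ⟨hz.1.le, hz.2.le⟩
  refine (hasDerivAt_integral_of_dominated_loc_of_deriv_le (Metric.ball_mem_nhds σ hδ)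
    (F' := fun ς z => KK' m p u v s ((q:ℝ)/τ) ς t z)
    (bound := fun _ => Mv * (1 + 4 * p)
      * (((2 * L * |(q : ℝ)|) ^ 2) ^ (-p2) * (‖t‖ ^ 2 + (2 * L) ^ 2) ^ (-p1)))
    ?_ ?_ ?_ ?_ ?_ ?_).2
  · filter_upwards [Metric.ball_mem_nhds σ hδ] with ς hς
    exact ((cont_z_KK (s := s) hL hτ hττ hub hvb hε hεM hq ς (hball ς hς) t).mono
      Set.Ioo_subset_Icc_self).aestronglyMeasurable measurableSet_Ioo
  · refine Integrable.mono' (g := fun _ => 2 * L * (((2 * L * |(q : ℝ)|) ^ 2) ^ (-p2)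
        * (‖t‖ ^ 2 + (2 * L) ^ 2) ^ (-p1)))
      ((integrableOn_const_iff).2 (Or.inr measure_Ioo_lt_top)) ?_ ?_
    · exact ((cont_z_KK (s := s) hL hτ hττ hub hvb hε hεM hq σ hσ.le t).mono
        Set.Ioo_subset_Icc_self).aestronglyMeasurable measurableSet_Ioo
    · refine (ae_restrict_iff' measurableSet_Ioo).2 (ae_of_all _ fun z hz => ?_)
      rw [Real.norm_eq_abs]
      exact KK_bound hL hτ hττ hub hvb hε hεM hps hp1 hp2 hq σ hσ.le t z (hmz z hz)
  · exact ((cont_z_KK' (s := s) hL hτ hττ hub hvb hε hεM hq σ hσ.le t).mono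
      Set.Ioo_subset_Icc_self).aestronglyMeasurable measurableSet_Ioo
  · refine (ae_restrict_iff' measurableSet_Ioo).2 (ae_of_all _ fun z hz => ?_)
    intro ς hς
    rw [Real.norm_eq_abs]
    exact KK'_bound hL hτ hττ hub hvb hε hεM hps hp1 hp2 hq ς (hball ς hς) t z (hmz z hz)
  · exact (integrableOn_const_iff).2 (Or.inr measure_Ioo_lt_top)
  · refine (ae_restrict_iff' measurableSet_Ioo).2 (ae_of_all _ fun z hz => ?_)
    intro ς hς
    have h0 := base_pos_t (s := s) hL hτ hττ hub hvb hε hεM hq ς (hball ς hς) t z (hmz z hz)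
    exact hasDerivAt_inner (u (s - t)) (v (s - t)) (v s) (u s) ((q:ℝ)/τ) (‖t‖ ^ 2) p ς z h0

include hL hp1 in
lemma gq_unif : ∀ t : ES m, (‖t‖ ^ 2 + (2 * L) ^ 2) ^ (-p1) ≤ ((2 * L) ^ 2) ^ (-p1) := by
  intro t
  exact rpow_le_rpow_of_nonpos (by positivity) (by nlinarith [sq_nonneg ‖t‖]) (by linarith)

include hL hτ hττ hu hv hub hvb hε hεM hps hp1 hp2 hq in
lemma cont_int_KK : ∀ σ : ℝ, |σ| ≤ ε →
    Continuous fun t => ∫ z in Set.Ioo (-1:ℝ) 1, KK m p u v s ((q:ℝ)/τ) σ t z := by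
  intro σ hσ
  have hmz : ∀ z : ℝ, z ∈ Set.Ioo (-1:ℝ) 1 → |z| ≤ 1 :=
    fun z hz => abs_le.2 ⟨hz.1.le, hz.2.le⟩
  refine continuous_of_dominated (bound := fun _ => 2 * L * (((2 * L * |(q : ℝ)|) ^ 2) ^ (-p2)
      * ((2 * L) ^ 2) ^ (-p1))) ?_ ?_ ?_ ?_
  · intro t
    exact ((cont_z_KK (s := s) hL hτ hττ hub hvb hε hεM hq σ hσ t).mono
      Set.Ioo_subset_Icc_self).aestronglyMeasurable measurableSet_Ioo
  · intro t
    refine (ae_restrict_iff' measurableSet_Ioo).2 (ae_of_all _ fun z hz => ?_)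
    rw [Real.norm_eq_abs]
    refine le_trans (KK_bound hL hτ hττ hub hvb hε hεM hps hp1 hp2 hq σ hσ t z (hmz z hz)) ?_
    have hg := gq_unif (m := m) hL hp1 t
    have hc : (0:ℝ) ≤ ((2 * L * |(q : ℝ)|) ^ 2) ^ (-p2) := by positivity
    exact mul_le_mul_of_nonneg_left (mul_le_mul_of_nonneg_left hg hc) (by positivity)
  · exact (integrableOn_const_iff).2 (Or.inr measure_Ioo_lt_top)
  · refine (ae_restrict_iff' measurableSet_Ioo).2 (ae_of_all _ fun z hz => ?_)
    exact cont_t_KK (s := s) hL hτ hττ hu hv hub hvb hε hεM hq σ hσ z (hmz z hz)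

include hL hτ hττ hu hv hub hvb hε hεM hps hp1 hp2 hq in
lemma cont_int_KK' : ∀ σ : ℝ, |σ| ≤ ε →
    Continuous fun t => ∫ z in Set.Ioo (-1:ℝ) 1, KK' m p u v s ((q:ℝ)/τ) σ t z := by
  intro σ hσ
  have hmz : ∀ z : ℝ, z ∈ Set.Ioo (-1:ℝ) 1 → |z| ≤ 1 :=
    fun z hz => abs_le.2 ⟨hz.1.le, hz.2.le⟩
  refine continuous_of_dominated (bound := fun _ => Mv * (1 + 4 * p)
      * (((2 * L * |(q : ℝ)|) ^ 2) ^ (-p2) * ((2 * L) ^ 2) ^ (-p1))) ?_ ?_ ?_ ?_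
  · intro t
    exact ((cont_z_KK' (s := s) hL hτ hττ hub hvb hε hεM hq σ hσ t).mono
      Set.Ioo_subset_Icc_self).aestronglyMeasurable measurableSet_Ioo
  · intro t
    refine (ae_restrict_iff' measurableSet_Ioo).2 (ae_of_all _ fun z hz => ?_)
    rw [Real.norm_eq_abs]
    refine le_trans (KK'_bound hL hτ hττ hub hvb hε hεM hps hp1 hp2 hq σ hσ t z (hmz z hz)) ?_
    have hg := gq_unif (m := m) hL hp1 t
    have hc : (0:ℝ) ≤ ((2 * L * |(q : ℝ)|) ^ 2) ^ (-p2) := by positivity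
    have hMv : 0 ≤ Mv := hMv0 hvb
    have hp0 : 0 ≤ p := by rw [hps]; linarith
    exact mul_le_mul_of_nonneg_left (mul_le_mul_of_nonneg_left hg hc)
      (mul_nonneg hMv (by linarith))
  · exact (integrableOn_const_iff).2 (Or.inr measure_Ioo_lt_top)
  · refine (ae_restrict_iff' measurableSet_Ioo).2 (ae_of_all _ fun z hz => ?_)
    exact cont_t_KK' (s := s) hL hτ hττ hu hv hub hvb hε hεM hq σ hσ z (hmz z hz)

include hL hτ hττ hu hv hub hvb hε hεM hps hp1 hp2 hpm hq in
lemma int_bound_KK : ∀ σ : ℝ, |σ| ≤ ε → ∀ t : ES m,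
    ‖∫ z in Set.Ioo (-1:ℝ) 1, KK m p u v s ((q:ℝ)/τ) σ t z‖
      ≤ 2 * (2 * L * (((2 * L * |(q : ℝ)|) ^ 2) ^ (-p2) * (‖t‖ ^ 2 + (2 * L) ^ 2) ^ (-p1))) := by
  intro σ hσ t
  have hmz : ∀ z : ℝ, z ∈ Set.Ioo (-1:ℝ) 1 → |z| ≤ 1 :=
    fun z hz => abs_le.2 ⟨hz.1.le, hz.2.le⟩
  have h := norm_integral_le_of_norm_le (μ := volume.restrict (Set.Ioo (-1:ℝ) 1))
    (g := fun _ => 2 * L * (((2 * L * |(q : ℝ)|) ^ 2) ^ (-p2) * (‖t‖ ^ 2 + (2 * L) ^ 2) ^ (-p1)))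
    ((integrableOn_const_iff).2 (Or.inr measure_Ioo_lt_top))
    ((ae_restrict_iff' measurableSet_Ioo).2 (ae_of_all _ fun z hz => by
      rw [Real.norm_eq_abs]
      exact KK_bound (s := s) hL hτ hττ hub hvb hε hεM hps hp1 hp2 hq σ hσ t z (hmz z hz)))
  refine le_trans h ?_
  rw [setIntegral_const, measureReal_def, Real.volume_Ioo, smul_eq_mul]
  rw [show ((1:ℝ) - (-1)) = 2 by norm_num, ENNReal.toReal_ofReal (by norm_num : (0:ℝ) ≤ 2)]

include hL hτ hττ hu hv hub hvb hε hεM hps hp1 hp2 hpm hq in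
lemma int_bound_KK' : ∀ σ : ℝ, |σ| ≤ ε → ∀ t : ES m,
    ‖∫ z in Set.Ioo (-1:ℝ) 1, KK' m p u v s ((q:ℝ)/τ) σ t z‖
      ≤ 2 * (Mv * (1 + 4 * p)
          * (((2 * L * |(q : ℝ)|) ^ 2) ^ (-p2) * (‖t‖ ^ 2 + (2 * L) ^ 2) ^ (-p1))) := by
  intro σ hσ t
  have hmz : ∀ z : ℝ, z ∈ Set.Ioo (-1:ℝ) 1 → |z| ≤ 1 :=
    fun z hz => abs_le.2 ⟨hz.1.le, hz.2.le⟩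
  have h := norm_integral_le_of_norm_le (μ := volume.restrict (Set.Ioo (-1:ℝ) 1))
    (g := fun _ => Mv * (1 + 4 * p)
      * (((2 * L * |(q : ℝ)|) ^ 2) ^ (-p2) * (‖t‖ ^ 2 + (2 * L) ^ 2) ^ (-p1)))
    ((integrableOn_const_iff).2 (Or.inr measure_Ioo_lt_top))
    ((ae_restrict_iff' measurableSet_Ioo).2 (ae_of_all _ fun z hz => by
      rw [Real.norm_eq_abs]
      exact KK'_bound (s := s) hL hτ hττ hub hvb hε hεM hps hp1 hp2 hq σ hσ t z (hmz z hz)))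
  refine le_trans h ?_
  rw [setIntegral_const, measureReal_def, Real.volume_Ioo, smul_eq_mul]
  rw [show ((1:ℝ) - (-1)) = 2 by norm_num, ENNReal.toReal_ofReal (by norm_num : (0:ℝ) ≤ 2)]

include hL hτ hττ hu hv hub hvb hε hεM hps hp1 hp2 hpm hq in
lemma outer_hasDeriv (σ : ℝ) (hσ : |σ| < ε) :
    HasDerivAt (fun ς => ∫ t : ES m, ∫ z in Set.Ioo (-1:ℝ) 1, KK m p u v s ((q:ℝ)/τ) ς t z)
      (∫ t : ES m, ∫ z in Set.Ioo (-1:ℝ) 1, KK' m p u v s ((q:ℝ)/τ) σ t z) σ := by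
  have hδ : 0 < ε - |σ| := by
    have := abs_nonneg σ; linarith
  have hball : ∀ ς ∈ Metric.ball σ (ε - |σ|), |ς| ≤ ε := by
    intro ς hς
    rw [Metric.mem_ball, Real.dist_eq] at hς
    have h := abs_add_le (ς - σ) σ
    simp only [sub_add_cancel] at h
    linarith
  have hballlt : ∀ ς ∈ Metric.ball σ (ε - |σ|), |ς| < ε := by
    intro ς hς
    rw [Metric.mem_ball, Real.dist_eq] at hς
    have h := abs_add_le (ς - σ) σ
    simp only [sub_add_cancel] at h
    linarith
  have hgint : Integrable (fun t : ES m => (‖t‖ ^ 2 + (2 * L) ^ 2) ^ (-p1)) :=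
    integrable_base m (by positivity) hpm
  refine (hasDerivAt_integral_of_dominated_loc_of_deriv_le (Metric.ball_mem_nhds σ hδ)
    (F' := fun ς t => ∫ z in Set.Ioo (-1:ℝ) 1, KK' m p u v s ((q:ℝ)/τ) ς t z)
    (bound := fun t => 2 * (Mv * (1 + 4 * p)
      * (((2 * L * |(q : ℝ)|) ^ 2) ^ (-p2) * (‖t‖ ^ 2 + (2 * L) ^ 2) ^ (-p1))))
    ?_ ?_ ?_ ?_ ?_ ?_).2
  · filter_upwards [Metric.ball_mem_nhds σ hδ] with ς hς
    exact (cont_int_KK hL hτ hττ hu hv hub hvb hε hεM hps hp1 hp2 hq ς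
      (hball ς hς)).aestronglyMeasurable
  · refine Integrable.mono' (g := fun t => 2 * (2 * L * (((2 * L * |(q : ℝ)|) ^ 2) ^ (-p2)
        * (‖t‖ ^ 2 + (2 * L) ^ 2) ^ (-p1))))
      (((hgint.const_mul _).const_mul (2 * L)).const_mul 2)
      (cont_int_KK hL hτ hττ hu hv hub hvb hε hεM hps hp1 hp2 hq σ hσ.le).aestronglyMeasurable
      (ae_of_all _ fun t => int_bound_KK hL hτ hττ hu hv hub hvb hε hεM hps hp1 hp2 hpm hq σ hσ.le t)
  · exact (cont_int_KK' hL hτ hττ hu hv hub hvb hε hεM hps hp1 hp2 hq σ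
      hσ.le).aestronglyMeasurable
  · refine ae_of_all _ fun t ς hς => ?_
    exact int_bound_KK' hL hτ hττ hu hv hub hvb hε hεM hps hp1 hp2 hpm hq ς (hball ς hς) t
  · exact ((hgint.const_mul _).const_mul _).const_mul 2
  · refine ae_of_all _ fun t ς hς => ?_
    exact inner_hasDeriv hL hτ hττ hub hvb hε hεM hps hp1 hp2 hq ς (hballlt ς hς) t

include hL hτ hττ hu hv hub hvb hε hεM hps hp1 hp2 hpm hq in
lemma Phi_norm : ∀ σ : ℝ, |σ| ≤ ε →
    ‖∫ t : ES m, ∫ z in Set.Ioo (-1:ℝ) 1, KK m p u v s ((q:ℝ)/τ) σ t z‖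
      ≤ 2 * (2 * L * (((2 * L * |(q : ℝ)|) ^ 2) ^ (-p2)
          * ∫ t : ES m, (‖t‖ ^ 2 + (2 * L) ^ 2) ^ (-p1))) := by
  intro σ hσ
  have hgint : Integrable (fun t : ES m => (‖t‖ ^ 2 + (2 * L) ^ 2) ^ (-p1)) :=
    integrable_base m (by positivity) hpm
  have h := norm_integral_le_of_norm_le (μ := (volume : Measure (ES m)))
    (g := fun t => 2 * (2 * L * (((2 * L * |(q : ℝ)|) ^ 2) ^ (-p2)
      * (‖t‖ ^ 2 + (2 * L) ^ 2) ^ (-p1))))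
    (((hgint.const_mul _).const_mul (2 * L)).const_mul 2)
    (ae_of_all _ fun t => int_bound_KK (s := s) hL hτ hττ hu hv hub hvb hε hεM hps hp1 hp2 hpm hq σ hσ t)
  refine le_trans h (le_of_eq ?_)
  rw [integral_const_mul, integral_const_mul, integral_const_mul]

include hL hτ hττ hu hv hub hvb hε hεM hps hp1 hp2 hpm hq in
lemma Psi_norm : ∀ σ : ℝ, |σ| ≤ ε →
    ‖∫ t : ES m, ∫ z in Set.Ioo (-1:ℝ) 1, KK' m p u v s ((q:ℝ)/τ) σ t z‖
      ≤ 2 * (Mv * (1 + 4 * p) * (((2 * L * |(q : ℝ)|) ^ 2) ^ (-p2)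
          * ∫ t : ES m, (‖t‖ ^ 2 + (2 * L) ^ 2) ^ (-p1))) := by
  intro σ hσ
  have hgint : Integrable (fun t : ES m => (‖t‖ ^ 2 + (2 * L) ^ 2) ^ (-p1)) :=
    integrable_base m (by positivity) hpm
  have h := norm_integral_le_of_norm_le (μ := (volume : Measure (ES m)))
    (g := fun t => 2 * (Mv * (1 + 4 * p) * (((2 * L * |(q : ℝ)|) ^ 2) ^ (-p2)
      * (‖t‖ ^ 2 + (2 * L) ^ 2) ^ (-p1))))
    (((hgint.const_mul _).const_mul _).const_mul 2)
    (ae_of_all _ fun t => int_bound_KK' (s := s) hL hτ hττ hu hv hub hvb hε hεM hps hp1 hp2 hpm hq σ hσ t)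
  refine le_trans h (le_of_eq ?_)
  rw [integral_const_mul, integral_const_mul, integral_const_mul]

include hL hτ hττ hub in
lemma hu2L : ∀ x, |u x| ≤ 2 * L := by
  intro x
  have := hub x
  have h1 : (0:ℝ) < 1 / (6 * L) := lt_of_le_of_lt (abs_nonneg τ) hττ
  linarith

include hL hτ hττ hu hv hub hvb hps hp1 hp2 hpm hq in
lemma intA : Integrable (fun t : ES m =>
    (v s - v (s - t)) / (‖t‖ ^ 2 + (u s - u (s - t) - (q:ℝ)/τ) ^ 2) ^ p)
    ∧ ‖∫ t : ES m, (v s - v (s - t)) / (‖t‖ ^ 2 + (u s - u (s - t) - (q:ℝ)/τ) ^ 2) ^ p‖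
      ≤ 2 * Mv * (((2 * L * |(q : ℝ)|) ^ 2) ^ (-p2)
          * ∫ t : ES m, (‖t‖ ^ 2 + (2 * L) ^ 2) ^ (-p1)) := by
  have h2L := hu2L hL hτ hττ hub
  have hbl : ∀ t : ES m, (2 * L * |(q : ℝ)|) ^ 2 ≤ (u s - u (s - t) - (q:ℝ)/τ) ^ 2 := by
    intro t
    have := absW_lb hL hτ hττ (h2L s) (h2L (s - t)) hq (z := (1:ℝ)) (by norm_num)
    rwa [mul_one] at this
  have hpos : ∀ t : ES m, 0 < ‖t‖ ^ 2 + (u s - u (s - t) - (q:ℝ)/τ) ^ 2 := by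
    intro t
    have h1 := hbl t
    have h2 : (0:ℝ) < (2 * L * |(q:ℝ)|) ^ 2 := by
      have hq1 : (1:ℝ) ≤ |(q:ℝ)| := by
        rw [← Int.cast_abs]; exact_mod_cast Int.one_le_abs hq
      positivity
    nlinarith [sq_nonneg ‖t‖]
  have hbnd : ∀ t : ES m, ‖(v s - v (s - t)) / (‖t‖ ^ 2 + (u s - u (s - t) - (q:ℝ)/τ) ^ 2) ^ p‖
      ≤ 2 * Mv * (((2 * L * |(q : ℝ)|) ^ 2) ^ (-p2) * (‖t‖ ^ 2 + (2 * L) ^ 2) ^ (-p1)) := by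
    intro t
    rw [Real.norm_eq_abs]
    refine div_den_le' hps ?_ (by linarith [hbl t, sq_nonneg ‖t‖]) (by positivity)
      (by positivity) (qsq_lb hL hq) hp1 hp2
    have h1 := _root_.abs_sub (v s) (v (s - t))
    have := hvb s; have := hvb (s - t)
    linarith
  have hcont : Continuous (fun t : ES m =>
      (v s - v (s - t)) / (‖t‖ ^ 2 + (u s - u (s - t) - (q:ℝ)/τ) ^ 2) ^ p) := by
    have hbase : Continuous (fun t : ES m => ‖t‖ ^ 2 + (u s - u (s - t) - (q:ℝ)/τ) ^ 2) := by
      fun_prop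
    exact Continuous.div (by fun_prop) (hbase.rpow_const fun t => Or.inl (hpos t).ne')
      (fun t => (Real.rpow_pos_of_pos (hpos t) p).ne')
  have hgint : Integrable (fun t : ES m => (‖t‖ ^ 2 + (2 * L) ^ 2) ^ (-p1)) :=
    integrable_base m (by positivity) hpm
  constructor
  · exact Integrable.mono' ((hgint.const_mul _).const_mul (2 * Mv))
      hcont.aestronglyMeasurable (ae_of_all _ hbnd)
  · have h := norm_integral_le_of_norm_le (μ := (volume : Measure (ES m)))
      ((hgint.const_mul _).const_mul (2 * Mv)) (ae_of_all _ hbnd)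
    refine le_trans h (le_of_eq ?_)
    rw [integral_const_mul, integral_const_mul]

include hL hτ hττ hu hv hub hvb hps hp1 hp2 hpm hq in
lemma intB : Integrable (fun t : ES m =>
    (v s + v (s - t)) / (‖t‖ ^ 2 + (u s + u (s - t) - (q:ℝ)/τ) ^ 2) ^ p)
    ∧ ‖∫ t : ES m, (v s + v (s - t)) / (‖t‖ ^ 2 + (u s + u (s - t) - (q:ℝ)/τ) ^ 2) ^ p‖
      ≤ 2 * Mv * (((2 * L * |(q : ℝ)|) ^ 2) ^ (-p2)
          * ∫ t : ES m, (‖t‖ ^ 2 + (2 * L) ^ 2) ^ (-p1)) := by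
  have h2L := hu2L hL hτ hττ hub
  have hbl : ∀ t : ES m, (2 * L * |(q : ℝ)|) ^ 2 ≤ (u s + u (s - t) - (q:ℝ)/τ) ^ 2 := by
    intro t
    have h := absW_lb hL hτ hττ (h2L s) (h2L (s - t)) hq (z := (-1:ℝ)) (by norm_num)
    rwa [show u s - u (s - t) * (-1) - (q:ℝ)/τ = u s + u (s - t) - (q:ℝ)/τ by ring] at h
  have hpos : ∀ t : ES m, 0 < ‖t‖ ^ 2 + (u s + u (s - t) - (q:ℝ)/τ) ^ 2 := by
    intro t
    have h1 := hbl t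
    have h2 : (0:ℝ) < (2 * L * |(q:ℝ)|) ^ 2 := by
      have hq1 : (1:ℝ) ≤ |(q:ℝ)| := by
        rw [← Int.cast_abs]; exact_mod_cast Int.one_le_abs hq
      positivity
    nlinarith [sq_nonneg ‖t‖]
  have hbnd : ∀ t : ES m, ‖(v s + v (s - t)) / (‖t‖ ^ 2 + (u s + u (s - t) - (q:ℝ)/τ) ^ 2) ^ p‖
      ≤ 2 * Mv * (((2 * L * |(q : ℝ)|) ^ 2) ^ (-p2) * (‖t‖ ^ 2 + (2 * L) ^ 2) ^ (-p1)) := by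
    intro t
    rw [Real.norm_eq_abs]
    refine div_den_le' hps ?_ (by linarith [hbl t, sq_nonneg ‖t‖]) (by positivity)
      (by positivity) (qsq_lb hL hq) hp1 hp2
    have h1 := abs_add_le (v s) (v (s - t))
    have := hvb s; have := hvb (s - t)
    linarith
  have hcont : Continuous (fun t : ES m =>
      (v s + v (s - t)) / (‖t‖ ^ 2 + (u s + u (s - t) - (q:ℝ)/τ) ^ 2) ^ p) := by
    have hbase : Continuous (fun t : ES m => ‖t‖ ^ 2 + (u s + u (s - t) - (q:ℝ)/τ) ^ 2) := by
      fun_prop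
    exact Continuous.div (by fun_prop) (hbase.rpow_const fun t => Or.inl (hpos t).ne')
      (fun t => (Real.rpow_pos_of_pos (hpos t) p).ne')
  have hgint : Integrable (fun t : ES m => (‖t‖ ^ 2 + (2 * L) ^ 2) ^ (-p1)) :=
    integrable_base m (by positivity) hpm
  constructor
  · exact Integrable.mono' ((hgint.const_mul _).const_mul (2 * Mv))
      hcont.aestronglyMeasurable (ae_of_all _ hbnd)
  · have h := norm_integral_le_of_norm_le (μ := (volume : Measure (ES m)))
      ((hgint.const_mul _).const_mul (2 * Mv)) (ae_of_all _ hbnd)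
    refine le_trans h (le_of_eq ?_)
    rw [integral_const_mul, integral_const_mul]

end PerQ


/-- the directional derivative of `u ↦ 𝓗(τ,u)(s)` in the direction `v` exists
and is given by the explicit formula.  Here `N = m + 2 ≥ 2` and `τ₁ = 1/(6λ*)`. -/
theorem statement_15 (m : ℕ) (α β lamStar τ : ℝ) (hα : α ∈ Set.Ioo (0 : ℝ) 1)
    (hβ : β ∈ Set.Ioo α 1) (hl : 0 < lamStar) (hτ : τ ≠ 0) (hττ : |τ| < 1 / (6 * lamStar))
    (u v : ES m → ℝ) (hu : IsC1Beta β u) (hv : IsC1Beta β v)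
    (hunear : c1betaNorm β (fun x => u x - lamStar) < lamStar / 2) (s : ES m) :
    Tendsto
      (fun ς : ℝ => (Hcal m α τ (fun x => u x + ς * v x) s - Hcal m α τ u s) / ς)
      (𝓝[≠] (0 : ℝ))
      (𝓝 (-(∑' q : {q : ℤ // q ≠ 0},
            ∫ t : ES m, (v s - v (s - t)) /
              (‖t‖ ^ 2 + (u s - u (s - t) - (q : ℤ) / τ) ^ 2) ^ (((m : ℝ) + 2 + α) / 2)) +
          ∑' q : {q : ℤ // q ≠ 0},
            ∫ t : ES m, (v s + v (s - t)) /
              (‖t‖ ^ 2 + (u s + u (s - t) - (q : ℤ) / τ) ^ 2) ^ (((m : ℝ) + 2 + α) / 2))) := by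
  obtain ⟨hα0, hα1⟩ := hα
  have hcu : Continuous u := hu.1.continuous
  have hcv : Continuous v := hv.1.continuous
  obtain ⟨Cv, hCv⟩ := hv.2.1
  have hvb : ∀ x, |v x| ≤ max Cv 0 := fun x => le_trans (hCv x) (le_max_left _ _)
  have hMv : (0:ℝ) ≤ max Cv 0 := le_max_right _ _
  have hub : ∀ x, |u x| ≤ 3 / 2 * lamStar := by
    obtain ⟨Cu, hCu⟩ := hu.2.1
    have hBdd : BddAbove (Set.range fun x : ES m => |u x - lamStar|) := by
      refine ⟨Cu + |lamStar|, ?_⟩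
      rintro y ⟨x, rfl⟩
      calc |u x - lamStar| ≤ |u x| + |lamStar| := _root_.abs_sub _ _
        _ ≤ Cu + |lamStar| := add_le_add (hCu x) le_rfl
    have h2 : 0 ≤ ⨆ x : ES m, ‖fderiv ℝ (fun x => u x - lamStar) x‖ :=
      Real.iSup_nonneg fun x => norm_nonneg _
    have h3 : 0 ≤ holderSemi β (fun x => u x - lamStar) := by
      refine Real.iSup_nonneg fun pr => ?_
      by_cases h : pr.1 = pr.2
      · simp [h]
      · simp only [h, if_false]
        positivity
    intro x
    have h1 : |u x - lamStar| ≤ ⨆ x : ES m, |u x - lamStar| := le_ciSup hBdd x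
    have h4 : (⨆ x : ES m, |u x - lamStar|) < lamStar / 2 := by
      unfold c1betaNorm at hunear
      linarith
    have h5 : |u x| ≤ |u x - lamStar| + |lamStar| := by
      calc |u x| = |(u x - lamStar) + lamStar| := by ring_nf
        _ ≤ |u x - lamStar| + |lamStar| := abs_add_le _ _
    rw [abs_of_pos hl] at h5
    linarith
  have hε : (0:ℝ) < lamStar / (2 * (max Cv 0 + 1)) := by positivity
  have hεM : lamStar / (2 * (max Cv 0 + 1)) * max Cv 0 ≤ lamStar / 2 := by
    rw [div_mul_eq_mul_div, div_le_div_iff₀ (by positivity) (by norm_num)]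
    nlinarith
  have hps : (((m : ℝ) + 2 + α) / 2) = (((m : ℝ) + 1 + α / 2) / 2) + ((1 + α / 2) / 2) := by ring
  have hp1 : 0 ≤ (((m : ℝ) + 1 + α / 2) / 2) := by positivity
  have hp2 : 0 ≤ ((1 + α / 2) / 2) := by positivity
  have hpm : ((m:ℕ) + 1 : ℝ) < 2 * (((m : ℝ) + 1 + α / 2) / 2) := by
    have h : 2 * (((m : ℝ) + 1 + α / 2) / 2) = (m:ℝ) + 1 + α / 2 := by ring
    rw [h]
    linarith
  have hCqsum : Summable (fun q : {q : ℤ // q ≠ 0} => ((2 * lamStar * |((q : ℤ) : ℝ)|) ^ 2) ^ (-((1 + α / 2) / 2))) :=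
    summable_Cq hl (by linarith : (1:ℝ) < 1 + α / 2)
  -- derivative of each `Φ q` at 0
  have hderiv : ∀ q : {q : ℤ // q ≠ 0},
      HasDerivAt (fun ς : ℝ => ∫ t : ES m, ∫ z in Set.Ioo (-1:ℝ) 1, KK m (((m : ℝ) + 2 + α) / 2) u v s (((q : ℤ) : ℝ) / τ) ς t z) (∫ t : ES m, ((v s + v (s - t)) / (‖t‖ ^ 2 + (u s + u (s - t) - (((q : ℤ) : ℝ) / τ)) ^ 2) ^ (((m : ℝ) + 2 + α) / 2) - (v s - v (s - t)) / (‖t‖ ^ 2 + (u s - u (s - t) - (((q : ℤ) : ℝ) / τ)) ^ 2) ^ (((m : ℝ) + 2 + α) / 2))) 0 := by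
    intro q
    have h0 : |(0:ℝ)| < lamStar / (2 * (max Cv 0 + 1)) := by simpa using hε
    have h := outer_hasDeriv (s := s) hl hτ hττ hcu hcv hub hvb hε hεM hps hp1 hp2 hpm q.2 0 h0
    have hval : (∫ t : ES m, ∫ z in Set.Ioo (-1:ℝ) 1, KK' m (((m : ℝ) + 2 + α) / 2) u v s (((q : ℤ) : ℝ) / τ) 0 t z) = ∫ t : ES m, ((v s + v (s - t)) / (‖t‖ ^ 2 + (u s + u (s - t) - (((q : ℤ) : ℝ) / τ)) ^ 2) ^ (((m : ℝ) + 2 + α) / 2) - (v s - v (s - t)) / (‖t‖ ^ 2 + (u s - u (s - t) - (((q : ℤ) : ℝ) / τ)) ^ 2) ^ (((m : ℝ) + 2 + α) / 2)) := by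
      refine integral_congr_ae (ae_of_all _ fun t => ?_)
      beta_reduce
      rw [FTC_KK' (s := s) hl hτ hττ hub hvb hε hεM hps hp1 hp2 q.2 0 (by simpa using hε.le) t]
      simp only [zero_mul, add_zero]
    rw [hval] at h
    exact h
  have hab : ∀ q : {q : ℤ // q ≠ 0},
      Tendsto (fun ς : ℝ => ((∫ t : ES m, ∫ z in Set.Ioo (-1:ℝ) 1, KK m (((m : ℝ) + 2 + α) / 2) u v s (((q : ℤ) : ℝ) / τ) ς t z) - (∫ t : ES m, ∫ z in Set.Ioo (-1:ℝ) 1, KK m (((m : ℝ) + 2 + α) / 2) u v s (((q : ℤ) : ℝ) / τ) 0 t z)) / ς) (𝓝[≠] (0:ℝ))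
        (𝓝 (∫ t : ES m, ((v s + v (s - t)) / (‖t‖ ^ 2 + (u s + u (s - t) - (((q : ℤ) : ℝ) / τ)) ^ 2) ^ (((m : ℝ) + 2 + α) / 2) - (v s - v (s - t)) / (‖t‖ ^ 2 + (u s - u (s - t) - (((q : ℤ) : ℝ) / τ)) ^ 2) ^ (((m : ℝ) + 2 + α) / 2)))) := by
    intro q
    have h := hasDerivAt_iff_tendsto_slope.1 (hderiv q)
    refine Tendsto.congr (fun ς => ?_) h
    rw [slope_def_field, sub_zero]
  have hballmem : Metric.ball (0:ℝ) (lamStar / (2 * (max Cv 0 + 1))) ∈ 𝓝[≠] (0:ℝ) :=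
    nhdsWithin_le_nhds (Metric.ball_mem_nhds _ hε)
  have hbd : ∀ᶠ ς : ℝ in 𝓝[≠] (0:ℝ), ∀ q : {q : ℤ // q ≠ 0},
      ‖((∫ t : ES m, ∫ z in Set.Ioo (-1:ℝ) 1, KK m (((m : ℝ) + 2 + α) / 2) u v s (((q : ℤ) : ℝ) / τ) ς t z) - (∫ t : ES m, ∫ z in Set.Ioo (-1:ℝ) 1, KK m (((m : ℝ) + 2 + α) / 2) u v s (((q : ℤ) : ℝ) / τ) 0 t z)) / ς‖
        ≤ 2 * (max Cv 0 * (1 + 4 * (((m : ℝ) + 2 + α) / 2)) * ((((2 * lamStar * |((q : ℤ) : ℝ)|) ^ 2) ^ (-((1 + α / 2) / 2))) * (∫ t : ES m, (‖t‖ ^ 2 + (2 * lamStar) ^ 2) ^ (-(((m : ℝ) + 1 + α / 2) / 2))))) := by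
    filter_upwards [hballmem, self_mem_nhdsWithin] with ς hςb hς0
    intro q
    have hmvt := Convex.norm_image_sub_le_of_norm_hasDerivWithin_le
      (f := fun ς : ℝ => ∫ t : ES m, ∫ z in Set.Ioo (-1:ℝ) 1, KK m (((m : ℝ) + 2 + α) / 2) u v s (((q : ℤ) : ℝ) / τ) ς t z)
      (f' := fun σ : ℝ => ∫ t : ES m, ∫ z in Set.Ioo (-1:ℝ) 1, KK' m (((m : ℝ) + 2 + α) / 2) u v s (((q : ℤ) : ℝ) / τ) σ t z)
      (s := Metric.ball (0:ℝ) (lamStar / (2 * (max Cv 0 + 1))))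
      (C := 2 * (max Cv 0 * (1 + 4 * (((m : ℝ) + 2 + α) / 2)) * ((((2 * lamStar * |((q : ℤ) : ℝ)|) ^ 2) ^ (-((1 + α / 2) / 2))) * (∫ t : ES m, (‖t‖ ^ 2 + (2 * lamStar) ^ 2) ^ (-(((m : ℝ) + 1 + α / 2) / 2))))))
      (fun σ hσ => by
        rw [Metric.mem_ball, dist_zero_right, Real.norm_eq_abs] at hσ
        exact (outer_hasDeriv (s := s) hl hτ hττ hcu hcv hub hvb hε hεM hps hp1 hp2 hpm q.2 σ hσ).hasDerivWithinAt)
      (fun σ hσ => by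
        rw [Metric.mem_ball, dist_zero_right, Real.norm_eq_abs] at hσ
        exact Psi_norm (s := s) hl hτ hττ hcu hcv hub hvb hε hεM hps hp1 hp2 hpm q.2 σ hσ.le)
      (convex_ball _ _) (Metric.mem_ball_self hε) hςb
    rw [norm_div, Real.norm_eq_abs ς, div_le_iff₀ (abs_pos.2 (by simpa using hς0))]
    refine le_trans hmvt (le_of_eq ?_)
    rw [sub_zero, Real.norm_eq_abs]
  have hsumbound : Summable (fun q : {q : ℤ // q ≠ 0} =>
      2 * (max Cv 0 * (1 + 4 * (((m : ℝ) + 2 + α) / 2)) * ((((2 * lamStar * |((q : ℤ) : ℝ)|) ^ 2) ^ (-((1 + α / 2) / 2))) * (∫ t : ES m, (‖t‖ ^ 2 + (2 * lamStar) ^ 2) ^ (-(((m : ℝ) + 1 + α / 2) / 2)))))) :=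
    (hCqsum.mul_left (2 * (max Cv 0 * (1 + 4 * (((m : ℝ) + 2 + α) / 2))) * (∫ t : ES m, (‖t‖ ^ 2 + (2 * lamStar) ^ 2) ^ (-(((m : ℝ) + 1 + α / 2) / 2))))).congr fun q => by ring
  have main := tendsto_tsum_of_dominated_convergence hsumbound hab hbd
  -- identify the limit value
  have hA : ∀ q : {q : ℤ // q ≠ 0}, Integrable (fun t : ES m =>
        (v s - v (s - t)) / (‖t‖ ^ 2 + (u s - u (s - t) - (((q : ℤ) : ℝ) / τ)) ^ 2) ^ (((m : ℝ) + 2 + α) / 2))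
      ∧ ‖∫ t : ES m, (v s - v (s - t)) / (‖t‖ ^ 2 + (u s - u (s - t) - (((q : ℤ) : ℝ) / τ)) ^ 2) ^ (((m : ℝ) + 2 + α) / 2)‖ ≤ 2 * max Cv 0 * ((((2 * lamStar * |((q : ℤ) : ℝ)|) ^ 2) ^ (-((1 + α / 2) / 2))) * (∫ t : ES m, (‖t‖ ^ 2 + (2 * lamStar) ^ 2) ^ (-(((m : ℝ) + 1 + α / 2) / 2)))) :=
    fun q => intA (s := s) hl hτ hττ hcu hcv hub hvb hps hp1 hp2 hpm q.2
  have hB : ∀ q : {q : ℤ // q ≠ 0}, Integrable (fun t : ES m =>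
        (v s + v (s - t)) / (‖t‖ ^ 2 + (u s + u (s - t) - (((q : ℤ) : ℝ) / τ)) ^ 2) ^ (((m : ℝ) + 2 + α) / 2))
      ∧ ‖∫ t : ES m, (v s + v (s - t)) / (‖t‖ ^ 2 + (u s + u (s - t) - (((q : ℤ) : ℝ) / τ)) ^ 2) ^ (((m : ℝ) + 2 + α) / 2)‖ ≤ 2 * max Cv 0 * ((((2 * lamStar * |((q : ℤ) : ℝ)|) ^ 2) ^ (-((1 + α / 2) / 2))) * (∫ t : ES m, (‖t‖ ^ 2 + (2 * lamStar) ^ 2) ^ (-(((m : ℝ) + 1 + α / 2) / 2)))) :=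
    fun q => intB (s := s) hl hτ hττ hcu hcv hub hvb hps hp1 hp2 hpm q.2
  have hsA : Summable (fun q : {q : ℤ // q ≠ 0} => ∫ t : ES m, (v s - v (s - t)) / (‖t‖ ^ 2 + (u s - u (s - t) - (((q : ℤ) : ℝ) / τ)) ^ 2) ^ (((m : ℝ) + 2 + α) / 2)) :=
    Summable.of_norm_bounded
      ((hCqsum.mul_left (2 * max Cv 0 * (∫ t : ES m, (‖t‖ ^ 2 + (2 * lamStar) ^ 2) ^ (-(((m : ℝ) + 1 + α / 2) / 2))))).congr fun q => by ring)
      (fun q => (hA q).2)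
  have hsB : Summable (fun q : {q : ℤ // q ≠ 0} => ∫ t : ES m, (v s + v (s - t)) / (‖t‖ ^ 2 + (u s + u (s - t) - (((q : ℤ) : ℝ) / τ)) ^ 2) ^ (((m : ℝ) + 2 + α) / 2)) :=
    Summable.of_norm_bounded
      ((hCqsum.mul_left (2 * max Cv 0 * (∫ t : ES m, (‖t‖ ^ 2 + (2 * lamStar) ^ 2) ^ (-(((m : ℝ) + 1 + α / 2) / 2))))).congr fun q => by ring)
      (fun q => (hB q).2)
  have hpt : (∑' q : {q : ℤ // q ≠ 0}, (∫ t : ES m, ((v s + v (s - t)) / (‖t‖ ^ 2 + (u s + u (s - t) - (((q : ℤ) : ℝ) / τ)) ^ 2) ^ (((m : ℝ) + 2 + α) / 2) - (v s - v (s - t)) / (‖t‖ ^ 2 + (u s - u (s - t) - (((q : ℤ) : ℝ) / τ)) ^ 2) ^ (((m : ℝ) + 2 + α) / 2))))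
      = -(∑' q : {q : ℤ // q ≠ 0}, ∫ t : ES m, (v s - v (s - t)) / (‖t‖ ^ 2 + (u s - u (s - t) - (((q : ℤ) : ℝ) / τ)) ^ 2) ^ (((m : ℝ) + 2 + α) / 2)) + ∑' q : {q : ℤ // q ≠ 0}, ∫ t : ES m, (v s + v (s - t)) / (‖t‖ ^ 2 + (u s + u (s - t) - (((q : ℤ) : ℝ) / τ)) ^ 2) ^ (((m : ℝ) + 2 + α) / 2) := by
    calc (∑' q : {q : ℤ // q ≠ 0}, (∫ t : ES m, ((v s + v (s - t)) / (‖t‖ ^ 2 + (u s + u (s - t) - (((q : ℤ) : ℝ) / τ)) ^ 2) ^ (((m : ℝ) + 2 + α) / 2) - (v s - v (s - t)) / (‖t‖ ^ 2 + (u s - u (s - t) - (((q : ℤ) : ℝ) / τ)) ^ 2) ^ (((m : ℝ) + 2 + α) / 2))))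
        = ∑' q : {q : ℤ // q ≠ 0}, ((∫ t : ES m, (v s + v (s - t)) / (‖t‖ ^ 2 + (u s + u (s - t) - (((q : ℤ) : ℝ) / τ)) ^ 2) ^ (((m : ℝ) + 2 + α) / 2)) - (∫ t : ES m, (v s - v (s - t)) / (‖t‖ ^ 2 + (u s - u (s - t) - (((q : ℤ) : ℝ) / τ)) ^ 2) ^ (((m : ℝ) + 2 + α) / 2))) :=
          tsum_congr fun q => integral_sub (hB q).1 (hA q).1
      _ = (∑' q : {q : ℤ // q ≠ 0}, ∫ t : ES m, (v s + v (s - t)) / (‖t‖ ^ 2 + (u s + u (s - t) - (((q : ℤ) : ℝ) / τ)) ^ 2) ^ (((m : ℝ) + 2 + α) / 2)) - ∑' q : {q : ℤ // q ≠ 0}, ∫ t : ES m, (v s - v (s - t)) / (‖t‖ ^ 2 + (u s - u (s - t) - (((q : ℤ) : ℝ) / τ)) ^ 2) ^ (((m : ℝ) + 2 + α) / 2) :=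
          hsB.tsum_sub hsA
      _ = _ := by ring
  rw [← hpt]
  refine Tendsto.congr' ?_ main
  filter_upwards [hballmem] with ς hςb
  rw [Metric.mem_ball, dist_zero_right, Real.norm_eq_abs] at hςb
  have hs1 : Summable (fun q : {q : ℤ // q ≠ 0} => ∫ t : ES m, ∫ z in Set.Ioo (-1:ℝ) 1, KK m (((m : ℝ) + 2 + α) / 2) u v s (((q : ℤ) : ℝ) / τ) ς t z) :=
    Summable.of_norm_bounded
      ((hCqsum.mul_left (2 * (2 * lamStar) * (∫ t : ES m, (‖t‖ ^ 2 + (2 * lamStar) ^ 2) ^ (-(((m : ℝ) + 1 + α / 2) / 2))))).congr fun q => by ring)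
      (fun q => Phi_norm (s := s) hl hτ hττ hcu hcv hub hvb hε hεM hps hp1 hp2 hpm q.2 ς hςb.le)
  have hs0 : Summable (fun q : {q : ℤ // q ≠ 0} => ∫ t : ES m, ∫ z in Set.Ioo (-1:ℝ) 1, KK m (((m : ℝ) + 2 + α) / 2) u v s (((q : ℤ) : ℝ) / τ) 0 t z) :=
    Summable.of_norm_bounded
      ((hCqsum.mul_left (2 * (2 * lamStar) * (∫ t : ES m, (‖t‖ ^ 2 + (2 * lamStar) ^ 2) ^ (-(((m : ℝ) + 1 + α / 2) / 2))))).congr fun q => by ring)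
      (fun q => Phi_norm (s := s) hl hτ hττ hcu hcv hub hvb hε hεM hps hp1 hp2 hpm q.2 0 (by simpa using hε.le))
  have e2 : Hcal m α τ (fun x => u x + ς * v x) s
      = ∑' q : {q : ℤ // q ≠ 0}, ∫ t : ES m, ∫ z in Set.Ioo (-1:ℝ) 1, KK m (((m : ℝ) + 2 + α) / 2) u v s (((q : ℤ) : ℝ) / τ) ς t z := rfl
  have e3 : Hcal m α τ u s = ∑' q : {q : ℤ // q ≠ 0}, ∫ t : ES m, ∫ z in Set.Ioo (-1:ℝ) 1, KK m (((m : ℝ) + 2 + α) / 2) u v s (((q : ℤ) : ℝ) / τ) 0 t z := by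
    simp only [Hcal, KK, zero_mul, add_zero]
  rw [e2, e3]
  calc (∑' q : {q : ℤ // q ≠ 0},
        ((∫ t : ES m, ∫ z in Set.Ioo (-1:ℝ) 1, KK m (((m : ℝ) + 2 + α) / 2) u v s (((q : ℤ) : ℝ) / τ) ς t z)
          - (∫ t : ES m, ∫ z in Set.Ioo (-1:ℝ) 1, KK m (((m : ℝ) + 2 + α) / 2) u v s (((q : ℤ) : ℝ) / τ) 0 t z)) / ς)
      = ∑' q : {q : ℤ // q ≠ 0},
        ((∫ t : ES m, ∫ z in Set.Ioo (-1:ℝ) 1, KK m (((m : ℝ) + 2 + α) / 2) u v s (((q : ℤ) : ℝ) / τ) ς t z)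
          - (∫ t : ES m, ∫ z in Set.Ioo (-1:ℝ) 1, KK m (((m : ℝ) + 2 + α) / 2) u v s (((q : ℤ) : ℝ) / τ) 0 t z)) * ς⁻¹ :=
        tsum_congr fun q => div_eq_mul_inv _ _
    _ = ((∑' q : {q : ℤ // q ≠ 0},
          ∫ t : ES m, ∫ z in Set.Ioo (-1:ℝ) 1, KK m (((m : ℝ) + 2 + α) / 2) u v s (((q : ℤ) : ℝ) / τ) ς t z)
        - ∑' q : {q : ℤ // q ≠ 0},
          ∫ t : ES m, ∫ z in Set.Ioo (-1:ℝ) 1, KK m (((m : ℝ) + 2 + α) / 2) u v s (((q : ℤ) : ℝ) / τ) 0 t z) * ς⁻¹ := by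
        rw [tsum_mul_right, hs1.tsum_sub hs0]
    _ = _ := (div_eq_mul_inv _ _).symm
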